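/- Let X be a two-dimensional strictly convex real Banach space. A bounded linear operator T : X → X is left symmetric (i.e., for all A ∈ B(X), T ⊥_B A implies A ⊥_B T, where ⊥_B denotes Birkhoff-James orthogonality in the operator norm) if and only if T = 0. -/

import Mathlib

open Module Filter Topology

section Helpers
variable {X : Type*} [NormedAddCommGroup X] [NormedSpace ℝ X]


variable {X : Type*} [NormedAddCommGroup X] [NormedSpace ℝ X]

lemma exists_norm_attain {E : Type*} [NormedAddCommGroup E] [NormedSpace ℝ E]
    [FiniteDimensional ℝ X] [Nontrivial X] (A : X →L[ℝ] E) :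
    ∃ v : X, ‖v‖ = 1 ∧ ‖A v‖ = ‖A‖ := by
  obtain ⟨x0, hx0⟩ := exists_norm_eq X zero_le_one
  have hcomp : IsCompact (Metric.sphere (0:X) 1) := isCompact_sphere 0 1
  have hne : (Metric.sphere (0:X) 1).Nonempty := ⟨x0, by simpa [mem_sphere_iff_norm] using hx0⟩
  have hcont : ContinuousOn (fun v : X => ‖A v‖) (Metric.sphere (0:X) 1) :=
    (A.continuous.norm).continuousOn
  obtain ⟨v, hv, hmax⟩ := hcomp.exists_isMaxOn hne hcont
  have hv1 : ‖v‖ = 1 := by simpa [mem_sphere_iff_norm] using hv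
  refine ⟨v, hv1, le_antisymm (by simpa [hv1] using A.le_opNorm v) ?_⟩
  refine A.opNorm_le_bound (norm_nonneg _) (fun w => ?_)
  rcases eq_or_ne w 0 with rfl | hw
  · simp
  · have hwn : ‖w‖ ≠ 0 := norm_ne_zero_iff.mpr hw
    have hmem : (‖w‖⁻¹ • w) ∈ Metric.sphere (0:X) 1 := by
      simp [mem_sphere_iff_norm, norm_smul, abs_of_nonneg (inv_nonneg.mpr (norm_nonneg w)),
        inv_mul_cancel₀ hwn]
    have := hmax hmem
    have h2 : ‖A (‖w‖⁻¹ • w)‖ ≤ ‖A v‖ := this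
    have h3 : ‖A (‖w‖⁻¹ • w)‖ = ‖w‖⁻¹ * ‖A w‖ := by
      rw [map_smul, norm_smul, Real.norm_eq_abs, abs_of_nonneg (inv_nonneg.mpr (norm_nonneg w))]
    rw [h3] at h2
    calc ‖A w‖ = ‖w‖ * (‖w‖⁻¹ * ‖A w‖) := by field_simp
    _ ≤ ‖w‖ * ‖A v‖ := by nlinarith [norm_nonneg w]
    _ = ‖A v‖ * ‖w‖ := mul_comm _ _

lemma unit_eq_of_sameRay {u v : X} (hu : ‖u‖ = 1) (hv : ‖v‖ = 1)
    (h : SameRay ℝ u v) : u = v := by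
  rcases h with h0 | h0 | ⟨r1, r2, hr1, hr2, heq⟩
  · exact absurd (by simp [h0] : ‖u‖ = 0) (by simp [hu])
  · exact absurd (by simp [h0] : ‖v‖ = 0) (by simp [hv])
  · have : r1 = r2 := by
      have h1 : ‖r1 • u‖ = r1 := by rw [norm_smul, hu, Real.norm_eq_abs, abs_of_pos hr1, mul_one]
      have h2 : ‖r2 • v‖ = r2 := by rw [norm_smul, hv, Real.norm_eq_abs, abs_of_pos hr2, mul_one]
      rw [heq, h2] at h1; linarith
    subst this
    exact smul_right_injective X (ne_of_gt hr1) heq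

lemma norm_add_unit_lt [StrictConvexSpace ℝ X] {u v : X} (hu : ‖u‖ = 1) (hv : ‖v‖ = 1)
    (hne : u ≠ v) : ‖u + v‖ < 2 := by
  have : ¬ SameRay ℝ u v := fun h => hne (unit_eq_of_sameRay hu hv h)
  have := norm_add_lt_of_not_sameRay this
  rw [hu, hv] at this; linarith

lemma functional_max_unique [StrictConvexSpace ℝ X] (φ : X →L[ℝ] ℝ) {v1 v2 : X}
    (hv1 : ‖v1‖ = 1) (hv2 : ‖v2‖ = 1) (h1 : φ v1 = ‖φ‖) (h2 : φ v2 = ‖φ‖)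
    (hφ : φ ≠ 0) : v1 = v2 := by
  by_contra hne
  have hN : (0:ℝ) < ‖φ‖ := norm_pos_iff.mpr hφ
  have hlt : ‖v1 + v2‖ < 2 := norm_add_unit_lt hv1 hv2 hne
  have : φ (v1 + v2) ≤ ‖φ‖ * ‖v1 + v2‖ := le_trans (le_abs_self _) (φ.le_opNorm _)
  rw [map_add, h1, h2] at this
  nlinarith

/-- Danskin-type lemma: if at every norm-attaining unit vector of `A`, adding `t0 • T`
strictly decreases the value, then `A` is not BJ-orthogonal to `T`. -/
lemma lemB [FiniteDimensional ℝ X] [Nontrivial X] (A T : X →L[ℝ] X) (t0 : ℝ) (ht0 : t0 ≠ 0)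
    (hA : ∀ v : X, ‖v‖ = 1 → ‖A v‖ = ‖A‖ → ‖A v + t0 • T v‖ < ‖A‖)
    (hOrth : ∀ lam : ℝ, ‖A + lam • T‖ ≥ ‖A‖) : False := by
  -- choose maximizers for A + (t0/(n+1)) • T
  have key : ∀ n : ℕ, ∃ v : X, ‖v‖ = 1 ∧
      ‖A v + t0 • T v‖ ≥ ‖A‖ ∧ ‖A v‖ ≥ ‖A‖ - |t0| * ‖T‖ / (n+1) := by
    intro n
    set θ : ℝ := (1:ℝ)/(n+1) with hθdef
    have hθpos : 0 < θ := by positivity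
    have hθle : θ ≤ 1 := by
      rw [hθdef]
      rw [div_le_one (by positivity)]
      linarith [Nat.cast_nonneg (α := ℝ) n]
    obtain ⟨v, hv1, hveq⟩ := exists_norm_attain (A + (θ * t0) • T)
    refine ⟨v, hv1, ?_, ?_⟩
    · -- convexity
      have h1 : ‖A‖ ≤ ‖(A + (θ * t0) • T) v‖ := hveq ▸ hOrth (θ * t0)
      have h2 : (A + (θ * t0) • T) v = (1 - θ) • (A v) + θ • (A v + t0 • T v) := by
        simp only [ContinuousLinearMap.add_apply, ContinuousLinearMap.smul_apply]
        module
      have h3 : ‖(A + (θ * t0) • T) v‖ ≤ (1 - θ) * ‖A v‖ + θ * ‖A v + t0 • T v‖ := by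
        rw [h2]
        refine le_trans (norm_add_le _ _) ?_
        rw [norm_smul, norm_smul, Real.norm_eq_abs, Real.norm_eq_abs,
          abs_of_nonneg (by linarith), abs_of_nonneg (le_of_lt hθpos)]
      have h4 : ‖A v‖ ≤ ‖A‖ := by simpa [hv1] using A.le_opNorm v
      nlinarith
    · have h1 : ‖A‖ ≤ ‖(A + (θ * t0) • T) v‖ := hveq ▸ hOrth (θ * t0)
      have h2 : ‖(A + (θ * t0) • T) v‖ ≤ ‖A v‖ + θ * |t0| * ‖T‖ := by
        refine le_trans (by simp [ContinuousLinearMap.add_apply]; exact norm_add_le _ _) ?_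
        have : ‖(θ * t0) • T v‖ ≤ θ * |t0| * ‖T‖ := by
          rw [norm_smul, Real.norm_eq_abs, abs_mul, abs_of_pos hθpos]
          have := T.le_opNorm v
          rw [hv1, mul_one] at this
          exact mul_le_mul_of_nonneg_left this (by positivity)
        linarith [norm_add_le (A v) ((θ * t0) • T v)]
      have : θ * |t0| * ‖T‖ = |t0| * ‖T‖ / (n+1) := by
        rw [hθdef]; ring
      linarith
  choose v hv1 hvge hvlow using key
  obtain ⟨vbar, hmem, φ, hφ, htend⟩ :=
    (isCompact_sphere (0:X) 1).tendsto_subseq (x := v)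
      (fun n => by simpa [mem_sphere_iff_norm] using hv1 n)
  have hvbar1 : ‖vbar‖ = 1 := by simpa [mem_sphere_iff_norm] using hmem
  -- limits
  have hcont1 : Continuous (fun w : X => ‖A w + t0 • T w‖) := by fun_prop
  have hcont2 : Continuous (fun w : X => ‖A w‖) := by fun_prop
  have hlim1 : Tendsto (fun n => ‖A (v (φ n)) + t0 • T (v (φ n))‖) atTop
      (𝓝 ‖A vbar + t0 • T vbar‖) := (hcont1.tendsto vbar).comp htend
  have hlim2 : Tendsto (fun n => ‖A (v (φ n))‖) atTop (𝓝 ‖A vbar‖) :=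
    (hcont2.tendsto vbar).comp htend
  have hge1 : ‖A vbar + t0 • T vbar‖ ≥ ‖A‖ :=
    ge_of_tendsto hlim1 (Eventually.of_forall fun n => hvge (φ n))
  have hge2 : ‖A vbar‖ ≥ ‖A‖ := by
    have h0 : Tendsto (fun n : ℕ => ((n:ℝ) + 1)) atTop atTop :=
      tendsto_atTop_add_const_right _ 1 tendsto_natCast_atTop_atTop
    have h1 : Tendsto (fun n : ℕ => |t0| * ‖T‖ / ((n:ℝ)+1)) atTop (𝓝 0) :=
      Tendsto.div_atTop tendsto_const_nhds h0
    have hlow : Tendsto (fun n => ‖A‖ - |t0| * ‖T‖ / ((φ n : ℝ) + 1)) atTop (𝓝 (‖A‖ - 0)) :=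
      Tendsto.sub tendsto_const_nhds (h1.comp hφ.tendsto_atTop)
    rw [sub_zero] at hlow
    exact le_of_tendsto_of_tendsto' hlow hlim2 (fun n => hvlow (φ n))
  have heq : ‖A vbar‖ = ‖A‖ :=
    le_antisymm (by simpa [hvbar1] using A.le_opNorm vbar) hge2
  exact absurd hge1 (not_le.mpr (hA vbar hvbar1 heq))

/-- Existence of a unit vector BJ-orthogonal to a given nonzero vector, in dim ≥ 2. -/
lemma exists_unit_orth [FiniteDimensional ℝ X] (hdim : finrank ℝ X = 2) (x : X) (hx : x ≠ 0) :
    ∃ u : X, ‖u‖ = 1 ∧ ∀ t : ℝ, ‖u + t • x‖ ≥ 1 := by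
  -- find w outside span of x
  have hspan : Submodule.span ℝ {x} ≠ ⊤ := by
    intro h
    have h1 : finrank ℝ (Submodule.span ℝ {x}) = 1 := finrank_span_singleton hx
    rw [h] at h1
    rw [finrank_top] at h1
    omega
  obtain ⟨w, hw⟩ : ∃ w : X, w ∉ Submodule.span ℝ {x} := by
    by_contra h
    push_neg at h
    exact hspan (Submodule.eq_top_iff'.mpr h)
  have hxnorm : (0:ℝ) < ‖x‖ := norm_pos_iff.mpr hx
  set g : ℝ → ℝ := fun t => ‖w + t • x‖ with hg
  have hgcont : Continuous g := by fun_prop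
  set R : ℝ := (2 * ‖w‖ + 1) / ‖x‖ with hR
  have hRpos : 0 < R := by positivity
  have hKcomp : IsCompact (Set.Icc (-R) R) := isCompact_Icc
  obtain ⟨t0, ht0mem, ht0min⟩ := hKcomp.exists_isMinOn ⟨0, by constructor <;> linarith⟩
    hgcont.continuousOn
  have hmin : ∀ t : ℝ, g t0 ≤ g t := by
    intro t
    by_cases ht : t ∈ Set.Icc (-R) R
    · exact ht0min ht
    · have habs : R < |t| := by
        simp only [Set.mem_Icc, not_and_or, not_le] at ht
        rcases ht with h | h
        · rw [abs_of_neg (by linarith)]; linarith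
        · rw [abs_of_pos (by linarith)]; linarith
      have h1 : g t ≥ |t| * ‖x‖ - ‖w‖ := by
        have := norm_sub_norm_le (t • x) (-(w + t • x))
        simp only [hg]
        have h2 : ‖t • x‖ ≤ ‖w‖ + ‖w + t • x‖ := by
          calc ‖t • x‖ = ‖(w + t • x) - w‖ := by congr 1; abel
          _ ≤ ‖w + t • x‖ + ‖w‖ := norm_sub_le _ _
          _ = ‖w‖ + ‖w + t • x‖ := by ring
        rw [norm_smul, Real.norm_eq_abs] at h2
        linarith
      have h2 : |t| * ‖x‖ > 2 * ‖w‖ + 1 := by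
        have := (div_lt_iff₀ hxnorm).mp habs
        linarith [mul_comm |t| ‖x‖]
      have h3 : g 0 ≤ ‖w‖ := by simp [hg]
      have h4 : g t0 ≤ g 0 := ht0min (by constructor <;> linarith)
      linarith
  set u0 : X := w + t0 • x with hu0
  have hu0ne : u0 ≠ 0 := by
    intro h
    apply hw
    have hw' : w = (-t0) • x := by
      have := eq_neg_of_add_eq_zero_left h
      rw [this, neg_smul]
    rw [hw']
    exact Submodule.smul_mem _ _ (Submodule.mem_span_singleton_self x)
  have hu0pos : (0:ℝ) < ‖u0‖ := norm_pos_iff.mpr hu0ne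
  refine ⟨‖u0‖⁻¹ • u0, ?_, ?_⟩
  · rw [norm_smul, Real.norm_eq_abs, abs_of_pos (by positivity), inv_mul_cancel₀ (ne_of_gt hu0pos)]
  · intro t
    have hkey : ‖u0 + (t * ‖u0‖) • x‖ ≥ ‖u0‖ := by
      have := hmin (t0 + t * ‖u0‖)
      simp only [hg] at this ⊢
      have heq : w + (t0 + t * ‖u0‖) • x = u0 + (t * ‖u0‖) • x := by
        rw [hu0]; rw [add_smul]; abel
      rw [heq] at this
      exact this
    have heq2 : ‖u0‖⁻¹ • u0 + t • x = ‖u0‖⁻¹ • (u0 + (t * ‖u0‖) • x) := by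
      match_scalars <;> field_simp
    rw [heq2, norm_smul, Real.norm_eq_abs, abs_of_pos (by positivity)]
    rw [ge_iff_le, ← inv_mul_cancel₀ (ne_of_gt hu0pos)]
    exact mul_le_mul_of_nonneg_left hkey (by positivity)

lemma eq_of_sameRay_norm_eq {u v : X} (hn : ‖u‖ = ‖v‖) (hu : u ≠ 0)
    (h : SameRay ℝ u v) : u = v := by
  rcases h with h0 | h0 | ⟨r1, r2, hr1, hr2, heq⟩
  · exact absurd h0 hu
  · rw [h0, norm_zero] at hn; exact absurd (norm_eq_zero.mp hn) hu
  · have h1 : ‖r1 • u‖ = r1 * ‖u‖ := by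
      rw [norm_smul, Real.norm_eq_abs, abs_of_pos hr1]
    have h2 : ‖r2 • v‖ = r2 * ‖u‖ := by
      rw [norm_smul, Real.norm_eq_abs, abs_of_pos hr2, hn]
    have hupos : 0 < ‖u‖ := norm_pos_iff.mpr hu
    have : r1 = r2 := by
      rw [heq, h2] at h1
      exact (mul_right_cancel₀ (ne_of_gt hupos) h1).symm
    subst this
    exact smul_right_injective X (ne_of_gt hr1) heq

/-- strict monotonicity along an orthogonal direction -/
lemma orth_strict_mono [StrictConvexSpace ℝ X] {y q : X} (hq : q ≠ 0) (hy : y ≠ 0)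
    (horth : ∀ t : ℝ, ‖y + t • q‖ ≥ ‖y‖) {s c1 c2 : ℝ} (hs : s ≠ 0) (h0 : 0 ≤ c1)
    (h12 : c1 < c2) : ‖s • y + c1 • q‖ < ‖s • y + c2 • q‖ := by
  have hynorm : 0 < ‖y‖ := norm_pos_iff.mpr hy
  have hsabs : 0 < |s| := abs_pos.mpr hs
  -- (a) scaled orthogonality
  have ha : ∀ c : ℝ, ‖s • y + c • q‖ ≥ |s| * ‖y‖ := by
    intro c
    have heq : s • y + c • q = s • (y + (c/s) • q) := by
      rw [smul_add, smul_smul]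
      congr 2
      field_simp
    rw [heq, norm_smul, Real.norm_eq_abs]
    exact mul_le_mul_of_nonneg_left (horth (c/s)) (le_of_lt hsabs)
  -- (b) strictness
  have hb : ∀ c : ℝ, c ≠ 0 → |s| * ‖y‖ < ‖s • y + c • q‖ := by
    intro c hc
    rcases lt_or_eq_of_le (ha c) with h | h
    · exact h
    · exfalso
      set P := s • y with hP
      set Q := s • y + c • q with hQ
      have hPQ : P ≠ Q := by
        intro h'
        have : c • q = 0 := by
          have := h'.symm
          rw [hQ, hP] at this
          simpa using this
        rcases smul_eq_zero.mp this with h'' | h''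
        · exact hc h''
        · exact hq h''
      have hPnorm : ‖P‖ = |s| * ‖y‖ := by rw [hP, norm_smul, Real.norm_eq_abs]
      have hQnorm : ‖Q‖ = |s| * ‖y‖ := h.symm
      have hnotray : ¬ SameRay ℝ P Q := by
        intro hray
        exact hPQ (eq_of_sameRay_norm_eq (by rw [hPnorm, hQnorm]) (by
          rw [hP]; intro h'; rcases smul_eq_zero.mp h' with h'' | h''
          · exact hs h''
          · exact hy h'') hray)
      have hlt : ‖P + Q‖ < 2 * (|s| * ‖y‖) := by
        have := norm_add_lt_of_not_sameRay hnotray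
        rw [hPnorm, hQnorm] at this
        linarith
      have hgeq : ‖P + Q‖ ≥ 2 * (|s| * ‖y‖) := by
        have heq : P + Q = (2*s) • y + c • q := by
          rw [hP, hQ]
          module
        have := ha (c/2)
        have h2 : (2:ℝ) • (s • y + (c/2) • q) = P + Q := by
          rw [hP, hQ]; module
        calc ‖P + Q‖ = ‖(2:ℝ) • (s • y + (c/2) • q)‖ := by rw [h2]
        _ = 2 * ‖s • y + (c/2) • q‖ := by
            rw [norm_smul, Real.norm_eq_abs]; norm_num
        _ ≥ 2 * (|s| * ‖y‖) := by linarith [ha (c/2)]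
      linarith
  -- (c) conclusion
  have hc2 : 0 < c2 := lt_of_le_of_lt h0 h12
  set θ : ℝ := c1 / c2 with hθ
  have hθ0 : 0 ≤ θ := by positivity
  have hθ1 : θ < 1 := by rw [hθ, div_lt_one hc2]; exact h12
  have hsplit : s • y + c1 • q = (1 - θ) • (s • y) + θ • (s • y + c2 • q) := by
    have hc1 : c1 = θ * c2 := by rw [hθ]; field_simp
    rw [hc1]
    match_scalars <;> ring
  rw [hsplit]
  calc ‖(1 - θ) • (s • y) + θ • (s • y + c2 • q)‖
      ≤ (1-θ) * ‖s • y‖ + θ * ‖s • y + c2 • q‖ := by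
        refine le_trans (norm_add_le _ _) ?_
        have e1 : ‖(1-θ) • (s • y)‖ = (1-θ) * ‖s • y‖ := by
          rw [norm_smul, Real.norm_eq_abs, abs_of_nonneg (by linarith : (0:ℝ) ≤ 1-θ)]
        have e2 : ‖θ • (s • y + c2 • q)‖ = θ * ‖s • y + c2 • q‖ := by
          rw [norm_smul, Real.norm_eq_abs, abs_of_nonneg hθ0]
        rw [e1, e2]
    _ < (1-θ) * ‖s • y + c2 • q‖ + θ * ‖s • y + c2 • q‖ := by
        have hblt := hb c2 (ne_of_gt hc2)
        rw [norm_smul, Real.norm_eq_abs]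
        have : (1-θ) > 0 := by linarith
        nlinarith
    _ = ‖s • y + c2 • q‖ := by ring

end Helpers

def OpBJOrth {X : Type*} [NormedAddCommGroup X] [NormedSpace ℝ X]
    (T A : X →L[ℝ] X) : Prop :=
  ∀ lam : ℝ, ‖T + lam • A‖ ≥ ‖T‖

set_option maxHeartbeats 4000000 in
theorem left_symmetric_iff_zero_dim_two {X : Type*} [NormedAddCommGroup X]
    [NormedSpace ℝ X] [StrictConvexSpace ℝ X] [FiniteDimensional ℝ X]
    (hdim : Module.finrank ℝ X = 2) (T : X →L[ℝ] X) :
    (∀ A : X →L[ℝ] X, OpBJOrth T A → OpBJOrth A T) ↔ T = 0 := by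
  constructor
  · intro hsym
    by_contra hT
    haveI : Nontrivial X := by
      exact Module.nontrivial_of_finrank_pos (R := ℝ) (by omega)
    have hTnorm : 0 < ‖T‖ := norm_pos_iff.mpr hT
    obtain ⟨x, hx1, hxmax⟩ := exists_norm_attain T
    have hq : T x ≠ 0 := by
      rw [← norm_ne_zero_iff, hxmax]; exact ne_of_gt hTnorm
    have hx0 : x ≠ 0 := by
      intro h; rw [h, norm_zero] at hx1; norm_num at hx1
    obtain ⟨u, hu1, huorth⟩ := exists_unit_orth hdim x hx0
    have hu0 : u ≠ 0 := by
      intro h; rw [h, norm_zero] at hu1; norm_num at hu1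
    -- x and u are linearly independent
    have hindep : LinearIndependent ℝ ![x, u] := by
      rw [linearIndependent_fin2]
      refine ⟨by simpa using hu0, ?_⟩
      intro a hau
      simp only [Matrix.cons_val_one, Matrix.head_cons, Matrix.cons_val_zero] at hau
      have ha : a ≠ 0 := by
        intro h; rw [h, zero_smul] at hau; exact hx0 hau.symm
      have := huorth (-(1/a))
      rw [← hau] at this
      have heq : u + (-(1/a)) • (a • u) = 0 := by
        rw [smul_smul]
        have : (-(1/a)) * a = -1 := by field_simp
        rw [this, neg_one_smul]; abel
      rw [heq, norm_zero] at this
      linarith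
    let b : Basis (Fin 2) ℝ X :=
      basisOfLinearIndependentOfCardEqFinrank hindep (by simp [hdim])
    have hbcoe : ⇑b = ![x, u] := coe_basisOfLinearIndependentOfCardEqFinrank hindep (by simp [hdim])
    have hb0 : b 0 = x := by rw [hbcoe]; rfl
    have hb1 : b 1 = u := by rw [hbcoe]; rfl
    let f : X →L[ℝ] ℝ := LinearMap.toContinuousLinearMap (b.coord 0)
    let h : X →L[ℝ] ℝ := LinearMap.toContinuousLinearMap (b.coord 1)
    have hfdef : ∀ v : X, f v = b.repr v 0 := fun v => by
      simp [f, Basis.coord_apply]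
    have hhdef : ∀ v : X, h v = b.repr v 1 := fun v => by
      simp [h, Basis.coord_apply]
    have hrepr : ∀ v : X, v = f v • x + h v • u := by
      intro v
      have hs := b.sum_repr v
      rw [Fin.sum_univ_two, hb0, hb1] at hs
      rw [hfdef, hhdef]
      exact hs.symm
    have hfx : f x = 1 := by rw [hfdef, ← hb0, b.repr_self]; simp
    have hfu : f u = 0 := by rw [hfdef, ← hb1, b.repr_self]; simp
    have hhx : h x = 0 := by rw [hhdef, ← hb0, b.repr_self]; simp
    have hhu : h u = 1 := by rw [hhdef, ← hb1, b.repr_self]; simp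
    -- |h v| ≤ ‖v‖
    have hhbound : ∀ v : X, |h v| ≤ ‖v‖ := by
      intro v
      rcases eq_or_ne (h v) 0 with h0 | h0
      · rw [h0]; simp [norm_nonneg]
      · have hv : v = h v • (u + (f v / h v) • x) := by
          conv_lhs => rw [hrepr v]
          rw [smul_add, smul_smul]
          have : h v * (f v / h v) = f v := by field_simp
          rw [this]; abel
        calc |h v| = |h v| * 1 := (mul_one _).symm
        _ ≤ |h v| * ‖u + (f v / h v) • x‖ :=
            mul_le_mul_of_nonneg_left (huorth _) (abs_nonneg _)
        _ = ‖v‖ := by rw [← Real.norm_eq_abs, ← norm_smul, ← hv]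
    have hh1 : ‖h‖ = 1 := by
      refine le_antisymm (h.opNorm_le_bound zero_le_one (fun v => by
        rw [one_mul, Real.norm_eq_abs]; exact hhbound v)) ?_
      have := h.le_opNorm u
      rw [hhu, hu1, mul_one] at this
      simpa using this
    clear_value b
    clear_value f h
    -- Lemma A : T u = 0
    have hTu : T u = 0 := by
      by_contra hTu
      set A := h.smulRight (T u) with hA
      have hTA : OpBJOrth T A := by
        intro lam
        have h1 : ‖(T + lam • A) x‖ ≤ ‖T + lam • A‖ := by
          simpa [hx1] using (T + lam • A).le_opNorm x
        have h2 : (T + lam • A) x = T x := by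
          simp [hA, ContinuousLinearMap.smulRight_apply, hhx]
        rw [h2, hxmax] at h1
        exact h1
      have hAT := hsym A hTA
      have hAnorm : ‖A‖ = ‖T u‖ := by
        rw [hA, ContinuousLinearMap.norm_smulRight_apply]
        rw [hh1, one_mul]
      refine lemB A T (-1) (by norm_num) ?_ hAT
      intro v hv1 hveq
      have hTupos : 0 < ‖T u‖ := norm_pos_iff.mpr hTu
      have hAv : ‖A v‖ = |h v| * ‖T u‖ := by
        rw [hA, ContinuousLinearMap.smulRight_apply, norm_smul, Real.norm_eq_abs]
      have habs : |h v| = 1 := by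
        rw [hAv, hAnorm] at hveq
        field_simp at hveq
        exact hveq
      have hne : h ≠ 0 := by
        intro h0; rw [h0] at hhu; simp at hhu
      rcases abs_eq (by norm_num : (0:ℝ) ≤ 1) |>.mp habs with hpos | hneg
      · have hv : v = u := functional_max_unique h hv1 hu1 (by rw [hpos, hh1]) (by rw [hhu, hh1]) hne
        rw [hv]
        have : A u + (-1 : ℝ) • T u = 0 := by
          simp [hA, ContinuousLinearMap.smulRight_apply, hhu]
        rw [this, norm_zero, hAnorm]
        exact hTupos
      · have hvn : (-v) = u := by
          refine functional_max_unique h (by rw [norm_neg]; exact hv1) hu1 ?_ (by rw [hhu, hh1]) hne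
          rw [map_neg, hneg, hh1]; norm_num
        have hv : v = -u := by rw [← hvn]; abel
        rw [hv]
        have : A (-u) + (-1 : ℝ) • T (-u) = 0 := by
          simp [hA, ContinuousLinearMap.smulRight_apply, hhu]
        rw [this, norm_zero, hAnorm]
        exact hTupos
    -- T is rank one: T v = f v • q
    set q : X := T x with hqdef
    have hTrep : ∀ v : X, T v = f v • q := by
      intro v
      conv_lhs => rw [hrepr v]
      rw [map_add, map_smul, map_smul, hTu, smul_zero, add_zero, hqdef]
    have hqnorm : ‖q‖ = ‖T‖ := hxmax
    have hfnorm : ‖f‖ = 1 := by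
      have hTsm : T = f.smulRight q := by
        ext v
        rw [ContinuousLinearMap.smulRight_apply, hTrep v]
      have hns := ContinuousLinearMap.norm_smulRight_apply f q
      rw [← hTsm, hqnorm] at hns
      have h2 : ‖T‖ * 1 = ‖T‖ * ‖f‖ := by rw [mul_one, mul_comm]; exact hns
      exact (mul_left_cancel₀ (ne_of_gt hTnorm) h2).symm
    have hfbound : ∀ v : X, ‖v‖ = 1 → |f v| ≤ 1 := by
      intro v hv
      have := f.le_opNorm v
      rw [hfnorm, hv, one_mul, Real.norm_eq_abs] at this
      exact this
    -- find y with q ⊥ y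
    obtain ⟨ψ, hψ1, hψq'⟩ := exists_dual_vector ℝ q (norm_ne_zero_iff.mpr hq)
    have hψq : ψ q = ‖q‖ := by exact_mod_cast hψq'
    set y0 : X := ψ x • u - ψ u • x with hy0def
    have hψy0 : ψ y0 = 0 := by
      rw [hy0def, map_sub, map_smul, map_smul]
      simp [smul_eq_mul]
      ring
    have hy00 : y0 ≠ 0 := by
      intro h0
      have hcomb : ∑ i : Fin 2, (![-(ψ u), ψ x] i) • (![x, u] i) = 0 := by
        rw [Fin.sum_univ_two]
        simp only [Matrix.cons_val_zero, Matrix.cons_val_one, Matrix.head_cons]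
        rw [← h0, hy0def]; module
      have h2 := Fintype.linearIndependent_iff.mp hindep ![-(ψ u), ψ x] hcomb
      have hψu : ψ u = 0 := by have := h2 0; simpa using this
      have hψx : ψ x = 0 := by have := h2 1; simpa using this
      have : ψ q = 0 := by
        rw [hqdef]
        conv_lhs => rw [show T x = f x • q from hTrep x, hfx, one_smul, hqdef]
        conv_lhs => rw [hrepr (T x), map_add, map_smul, map_smul, hψx, hψu]
        simp
      rw [hψq] at this
      have h3 := norm_pos_iff.mpr hq
      linarith
    have hy0pos : 0 < ‖y0‖ := norm_pos_iff.mpr hy00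
    set y : X := ‖y0‖⁻¹ • y0 with hydef
    have hy1 : ‖y‖ = 1 := by
      rw [hydef, norm_smul, Real.norm_eq_abs, abs_of_pos (by positivity),
        inv_mul_cancel₀ (ne_of_gt hy0pos)]
    have hψy : ψ y = 0 := by rw [hydef, map_smul, hψy0, smul_zero]
    have hyne : y ≠ 0 := fun h0 => by rw [h0, norm_zero] at hy1; norm_num at hy1
    clear_value y0 y
    have hqy : ∀ t : ℝ, ‖q + t • y‖ ≥ ‖q‖ := by
      intro t
      have h1 : ψ (q + t • y) = ‖q‖ := by
        rw [map_add, map_smul, hψq, hψy, smul_zero, add_zero]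
      have h3 : |ψ (q + t • y)| ≤ ‖ψ‖ * ‖q + t • y‖ := by
        rw [← Real.norm_eq_abs]; exact ψ.le_opNorm _
      rw [hψ1, one_mul] at h3
      calc ‖q‖ = ψ (q + t • y) := h1.symm
      _ ≤ |ψ (q + t • y)| := le_abs_self _
      _ ≤ ‖q + t • y‖ := h3
    by_cases hyq : ∀ t : ℝ, ‖y + t • q‖ ≥ 1
    · -- case (ii): y ⊥ q as well; the two-parameter construction
      -- case (ii): y ⊥ q as well
      have hfh_ne : (f + h) ≠ 0 := by
        intro h0
        have h1 : (f + h) x = 0 := by rw [h0]; rfl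
        rw [ContinuousLinearMap.add_apply, hfx, hhx] at h1
        norm_num at h1
      obtain ⟨v0, hv01, hv0max⟩ := exists_norm_attain (f + h)
      set w0 : X := if 0 ≤ (f + h) v0 then v0 else -v0 with hw0def
      have hw01 : ‖w0‖ = 1 := by rw [hw0def]; split <;> simp [hv01]
      have hw0max : (f + h) w0 = ‖f + h‖ := by
        rw [hw0def]
        split
        next hc => rw [← hv0max, Real.norm_eq_abs, abs_of_nonneg hc]
        next hc =>
          push_neg at hc
          rw [map_neg, ← hv0max, Real.norm_eq_abs, abs_of_neg hc]
      set N : ℝ := ‖f + h‖ with hNdef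
      have hN1 : 1 ≤ N := by
        have h1 := (f + h).le_opNorm x
        rw [hx1, mul_one] at h1
        have h2 : (f + h) x = 1 := by rw [ContinuousLinearMap.add_apply, hfx, hhx]; norm_num
        rw [h2] at h1
        simpa using h1
      have hNgt : 1 < N := by
        rcases lt_or_eq_of_le hN1 with hlt | heq
        · exact hlt
        · exfalso
          have hx_att : (f + h) x = ‖f + h‖ := by
            rw [← hNdef, ← heq, ContinuousLinearMap.add_apply, hfx, hhx]; norm_num
          have hu_att : (f + h) u = ‖f + h‖ := by
            rw [← hNdef, ← heq, ContinuousLinearMap.add_apply, hfu, hhu]; norm_num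
          have hxu := functional_max_unique (f + h) hx1 hu1 hx_att hu_att hfh_ne
          rw [hxu, hhu] at hhx
          norm_num at hhx
      set a0 : ℝ := f w0 with ha0def
      set b0 : ℝ := h w0 with hb0def
      have hab0 : a0 + b0 = N := by
        rw [ha0def, hb0def, ← ContinuousLinearMap.add_apply, hw0max]
      have ha0le : a0 ≤ 1 := le_trans (le_abs_self _) (hfbound w0 hw01)
      have hb0le : b0 ≤ 1 := le_trans (le_abs_self _) (by rw [← hw01]; exact hhbound w0)
      have ha0pos : 0 < a0 := by linarith
      have hb0pos : 0 < b0 := by linarith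
      clear_value w0 N a0 b0
      set ε : ℕ → ℝ := fun n => 1 / (n + 1) with hεdef
      have hεpos : ∀ n, 0 < ε n := fun n => by positivity
      set A : ℕ → (X →L[ℝ] X) :=
        fun n => (f + h).smulRight y + h.smulRight ((ε n) • q) with hAdef
      have hAapp : ∀ n v, A n v = ((f + h) v) • y + (ε n * h v) • q := by
        intro n v
        rw [hAdef]
        simp only [ContinuousLinearMap.add_apply, ContinuousLinearMap.smulRight_apply]
        congr 1
        rw [smul_smul, mul_comm]
      have hAx : ∀ n, A n x = y := by
        intro n
        rw [hAapp]
        rw [ContinuousLinearMap.add_apply, hfx, hhx]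
        norm_num
      have hTA : ∀ n, OpBJOrth T (A n) := by
        intro n lam
        have h1 : ‖(T + lam • A n) x‖ ≤ ‖T + lam • A n‖ := by
          simpa [hx1] using (T + lam • A n).le_opNorm x
        have h2 : (T + lam • A n) x = q + lam • y := by
          rw [ContinuousLinearMap.add_apply, ContinuousLinearMap.smul_apply, hAx, ← hqdef]
        rw [h2] at h1
        calc ‖T‖ = ‖q‖ := hqnorm.symm
        _ ≤ ‖q + lam • y‖ := hqy lam
        _ ≤ _ := h1
      have hAT : ∀ n, OpBJOrth (A n) T := fun n => hsym (A n) (hTA n)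
      set t0 : ℕ → ℝ := fun n => -(ε n * b0 / 2) with ht0def
      have ht0neg : ∀ n, t0 n < 0 := by
        intro n
        rw [ht0def]
        simp only [neg_lt, neg_zero]
        positivity
      clear_value ε A t0
      have hexist : ∀ n : ℕ, ∃ v : X, ‖v‖ = 1 ∧ ‖A n v‖ = ‖A n‖ ∧ 0 ≤ (f + h) v ∧
          ‖A n v + t0 n • T v‖ ≥ ‖A n‖ := by
        intro n
        by_contra hcon
        push_neg at hcon
        refine lemB (A n) T (t0 n) (ne_of_lt (ht0neg n)) ?_ (hAT n)
        intro v hv1 hveq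
        rcases le_or_gt 0 ((f + h) v) with hsign | hsign
        · exact hcon v hv1 hveq hsign
        · have h1 := hcon (-v) (by rw [norm_neg]; exact hv1)
            (by rw [map_neg, norm_neg]; exact hveq) (by rw [map_neg]; linarith)
          have h2 : A n (-v) + t0 n • T (-v) = -(A n v + t0 n • T v) := by
            rw [map_neg, map_neg]; module
          rw [h2, norm_neg] at h1
          exact h1
      choose v hv1 hveq hvsign hvge using hexist
      -- lower bound on ‖A n‖
      have hNy : ∀ c : ℝ, N ≤ ‖N • y + c • q‖ := by
        intro c
        have hNne : N ≠ 0 := by linarith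
        have heq : N • y + c • q = N • (y + (c / N) • q) := by
          rw [smul_add, smul_smul]
          congr 2
          field_simp
        rw [heq, norm_smul, Real.norm_eq_abs, abs_of_pos (by linarith : (0:ℝ) < N)]
        calc N = N * 1 := (mul_one _).symm
        _ ≤ N * ‖y + (c / N) • q‖ :=
          mul_le_mul_of_nonneg_left (hyq (c / N)) (by linarith)
      have hAlow : ∀ n, N ≤ ‖A n‖ := by
        intro n
        have h1 : ‖A n w0‖ ≤ ‖A n‖ := by simpa [hw01] using (A n).le_opNorm w0
        refine le_trans ?_ h1
        rw [hAapp, hw0max, ← hb0def]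
        exact hNy (ε n * b0)
      -- upper bound at v n
      have hslow : ∀ n, (f + h) (v n) ≥ N - ε n * ‖q‖ := by
        intro n
        have h1 : ‖A n (v n)‖ ≤ (f + h) (v n) + ε n * ‖q‖ := by
          rw [hAapp]
          refine le_trans (norm_add_le _ _) ?_
          have e1 : ‖((f + h) (v n)) • y‖ = (f + h) (v n) := by
            rw [norm_smul, Real.norm_eq_abs, hy1, mul_one, abs_of_nonneg (hvsign n)]
          have e2 : ‖(ε n * h (v n)) • q‖ ≤ ε n * ‖q‖ := by
            rw [norm_smul, Real.norm_eq_abs, abs_mul, abs_of_pos (hεpos n)]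
            have hb : |h (v n)| ≤ 1 := by rw [← hv1 n]; exact hhbound (v n)
            have h3 : |h (v n)| * ‖q‖ ≤ 1 * ‖q‖ :=
              mul_le_mul_of_nonneg_right hb (norm_nonneg q)
            rw [one_mul] at h3
            rw [mul_assoc]
            exact mul_le_mul_of_nonneg_left h3 (le_of_lt (hεpos n))
          linarith
        have h2 := hAlow n
        rw [hveq n] at h1
        linarith
      -- compactness
      obtain ⟨vbar, hmem, φ, hφ, htend⟩ :=
        (isCompact_sphere (0:X) 1).tendsto_subseq (x := v)
          (fun n => by simpa [mem_sphere_iff_norm] using hv1 n)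
      have hvbar1 : ‖vbar‖ = 1 := by simpa [mem_sphere_iff_norm] using hmem
      have hfh_lim : Tendsto (fun k => (f + h) (v (φ k))) atTop (𝓝 ((f + h) vbar)) :=
        (((f + h).continuous.tendsto vbar)).comp htend
      have hvbar_max : (f + h) vbar = N := by
        refine le_antisymm ?_ ?_
        · have := (f + h).le_opNorm vbar
          rw [hvbar1, mul_one] at this
          calc (f + h) vbar ≤ |(f + h) vbar| := le_abs_self _
          _ ≤ N := by rw [← Real.norm_eq_abs, hNdef]; exact this
        · have h0 : Tendsto (fun k : ℕ => ((k:ℝ) + 1)) atTop atTop :=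
            tendsto_atTop_add_const_right _ 1 tendsto_natCast_atTop_atTop
          have h1 : Tendsto (fun k : ℕ => ‖q‖ / ((k:ℝ) + 1)) atTop (𝓝 0) :=
            Tendsto.div_atTop tendsto_const_nhds h0
          have hlow : Tendsto (fun k => N - ‖q‖ / ((φ k : ℝ) + 1)) atTop (𝓝 (N - 0)) :=
            Tendsto.sub tendsto_const_nhds (h1.comp hφ.tendsto_atTop)
          rw [sub_zero] at hlow
          refine le_of_tendsto_of_tendsto' hlow hfh_lim (fun k => ?_)
          have := hslow (φ k)
          rw [hεdef] at this
          calc N - ‖q‖ / ((φ k : ℝ) + 1) = N - 1 / ((φ k : ℝ) + 1) * ‖q‖ := by ring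
          _ ≤ (f + h) (v (φ k)) := this
      have hvbar_w0 : vbar = w0 :=
        functional_max_unique (f + h) hvbar1 hw01 (by rw [← hNdef]; exact hvbar_max)
          (by rw [← hNdef]; exact hw0max) hfh_ne
      -- eventual coordinate bounds
      have hf_lim : Tendsto (fun k => f (v (φ k))) atTop (𝓝 a0) := by
        have h2 := ((f.continuous.tendsto vbar)).comp htend
        rw [hvbar_w0] at h2
        rw [ha0def]
        exact h2
      have hh_lim : Tendsto (fun k => h (v (φ k))) atTop (𝓝 b0) := by
        have h2 := ((h.continuous.tendsto vbar)).comp htend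
        rw [hvbar_w0] at h2
        rw [hb0def]
        exact h2
      have e1 : ∀ᶠ k in atTop, a0 / 2 < f (v (φ k)) :=
        hf_lim.eventually (eventually_gt_nhds (by linarith))
      have e2 : ∀ᶠ k in atTop, b0 / 2 < h (v (φ k)) :=
        hh_lim.eventually (eventually_gt_nhds (by linarith))
      obtain ⟨K, hK1, hK2⟩ := (e1.and e2).exists
      set m : ℕ := φ K with hmdef
      set a : ℝ := f (v m) with hadef
      set bb : ℝ := h (v m) with hbbdef
      have hapos : 0 < a := by rw [hadef]; linarith [hK1]
      have hale : a ≤ 1 := le_trans (le_abs_self _) (hfbound (v m) (hv1 m))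
      have hbbgt : b0 / 2 < bb := hK2
      have hs : 0 < (f + h) (v m) := by
        rw [ContinuousLinearMap.add_apply, ← hadef, ← hbbdef]
        linarith
      set s : ℝ := (f + h) (v m) with hsdef
      set c2 : ℝ := ε m * bb with hc2def
      set c1 : ℝ := c2 + t0 m * a with hc1def
      have hc1nonneg : 0 ≤ c1 := by
        rw [hc1def, hc2def, ht0def]
        have hε := hεpos m
        have he : ε m * bb + -(ε m * b0 / 2) * a = ε m * (bb - b0 / 2 * a) := by ring
        rw [he]
        have h4 : b0 / 2 * a ≤ b0 / 2 := by
          calc b0 / 2 * a ≤ b0 / 2 * 1 := mul_le_mul_of_nonneg_left hale (by linarith)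
          _ = b0 / 2 := mul_one _
        exact mul_nonneg (le_of_lt hε) (by linarith)
      have hc1lt : c1 < c2 := by
        rw [hc1def]
        have h5 : t0 m * a < 0 := mul_neg_of_neg_of_pos (ht0neg m) hapos
        linarith
      have hmono : ‖s • y + c1 • q‖ < ‖s • y + c2 • q‖ := by
        refine orth_strict_mono hq hyne (fun t => ?_) (ne_of_gt hs) hc1nonneg hc1lt
        rw [hy1]; exact hyq t
      have hval : A m (v m) = s • y + c2 • q := by
        rw [hAapp, ← hsdef, ← hbbdef, ← hc2def]
      have hval2 : A m (v m) + t0 m • T (v m) = s • y + c1 • q := by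
        rw [hval, hTrep (v m), ← hadef, hc1def, smul_smul]
        rw [add_smul]
        abel
      have hfinal := hvge m
      rw [hval2] at hfinal
      have hAeq : ‖A m‖ = ‖s • y + c2 • q‖ := by rw [← hval, hveq m]
      rw [hAeq] at hfinal
      linarith
    · -- case (i): ¬ (y ⊥ q): rank-one A supported at x
      push_neg at hyq
      obtain ⟨t0, ht0⟩ := hyq
      have ht0ne : t0 ≠ 0 := by
        intro h0; rw [h0, zero_smul, add_zero, hy1] at ht0; linarith
      obtain ⟨ψx, hψx1, hψxx'⟩ := exists_dual_vector ℝ x (norm_ne_zero_iff.mpr hx0)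
      have hψxx : ψx x = 1 := by rw [hx1] at hψxx'; exact_mod_cast hψxx'
      set A := ψx.smulRight y with hAdef
      have hTA : OpBJOrth T A := by
        intro lam
        have h1 : ‖(T + lam • A) x‖ ≤ ‖T + lam • A‖ := by
          simpa [hx1] using (T + lam • A).le_opNorm x
        have h2 : (T + lam • A) x = q + lam • y := by
          rw [ContinuousLinearMap.add_apply, ContinuousLinearMap.smul_apply, hAdef,
            ContinuousLinearMap.smulRight_apply, hψxx, one_smul, ← hqdef]
        rw [h2] at h1
        calc ‖T‖ = ‖q‖ := hqnorm.symm
        _ ≤ ‖q + lam • y‖ := hqy lam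
        _ ≤ ‖T + lam • A‖ := h1
      have hAT := hsym A hTA
      have hAnorm : ‖A‖ = 1 := by
        rw [hAdef, ContinuousLinearMap.norm_smulRight_apply, hψx1, hy1, mul_one]
      refine lemB A T t0 ht0ne ?_ hAT
      intro v hv1 hveq
      have hψxne : ψx ≠ 0 := fun h0 => by rw [h0] at hψxx; simp at hψxx
      have hAv : ‖A v‖ = |ψx v| := by
        rw [hAdef, ContinuousLinearMap.smulRight_apply, norm_smul, Real.norm_eq_abs, hy1, mul_one]
      have habs : |ψx v| = 1 := by rw [hAv] at hveq; rw [hveq, hAnorm]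
      have he : A x + t0 • T x = y + t0 • q := by
        rw [hAdef, ContinuousLinearMap.smulRight_apply, hψxx, one_smul, ← hqdef]
      rcases (abs_eq (by norm_num : (0:ℝ) ≤ 1)).mp habs with hpos | hneg
      · have hv : v = x := functional_max_unique ψx hv1 hx1 (by rw [hpos, hψx1])
          (by rw [hψxx, hψx1]) hψxne
        rw [hv, he, hAnorm]
        exact ht0
      · have hvn : -v = x := functional_max_unique ψx (by rw [norm_neg]; exact hv1) hx1
          (by rw [map_neg, hneg, hψx1]; norm_num) (by rw [hψxx, hψx1]) hψxne
        have hv : v = -x := by rw [← hvn]; abel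
        have he2 : A v + t0 • T v = -(A x + t0 • T x) := by
          rw [hv, map_neg, map_neg]; module
        rw [he2, norm_neg, he, hAnorm]
        exact ht0
  · intro hT
    subst hT
    intro A _
    intro lam
    simp
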